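/- Suppose S ≥ c·K·P·log P queries are distributed over nodes, and every node receiving more than K queries is 'pulled', costing communication equal to the node's size, where node sizes are independent geometric random variables with expectation B. If nodes are placed independently uniformly at random among P bins, then with high probability in P each bin incurs O(B·S/(K·P)) pull communication. -/

import Mathlib

open MeasureTheory ProbabilityTheory

lemma stmt10_sz_zero {Ω : Type} [MeasureSpace Ω] [IsProbabilityMeasure (ℙ : Measure Ω)]
    (Z : Ω → ℕ) (hZ : Measurable Z) (q : ℝ) (hq0 : 0 < q) (hq1 : q ≤ 1)
    (hdist : ∀ s : ℕ, 1 ≤ s → ℙ {ω | Z ω = s} = ENNReal.ofReal (q * (1 - q) ^ (s - 1))) :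
    ℙ {ω | Z ω = 0} = 0 := by
  have hps : ∀ s : ℕ, MeasurableSet {ω | Z ω = s} := fun s =>
    hZ (measurableSet_singleton s)
  have h1q0 : (0:ℝ) ≤ 1 - q := by linarith
  have h1q1 : 1 - q < 1 := by linarith
  have htail : ℙ (⋃ n : ℕ, {ω | Z ω = n + 1}) = 1 := by
    have hdisj : Pairwise (Function.onFun Disjoint fun n : ℕ => {ω | Z ω = n + 1}) := by
      intro a b hab
      exact Set.disjoint_left.2 fun ω (h1 : Z ω = a + 1) (h2 : Z ω = b + 1) => by
        exact hab (by omega : a = b)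
    rw [measure_iUnion hdisj fun n => hps (n + 1)]
    have heach : ∀ n : ℕ, ℙ {ω | Z ω = n + 1} = ENNReal.ofReal (q * (1 - q) ^ n) :=
      fun n => by simpa using hdist (n + 1) (by omega)
    have hsummable : Summable (fun n : ℕ => q * (1 - q) ^ n) :=
      (summable_geometric_of_lt_one h1q0 h1q1).mul_left q
    calc ∑' n : ℕ, ℙ {ω | Z ω = n + 1}
        = ∑' n : ℕ, ENNReal.ofReal (q * (1 - q) ^ n) := tsum_congr heach
      _ = ENNReal.ofReal (∑' n : ℕ, q * (1 - q) ^ n) :=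
          (ENNReal.ofReal_tsum_of_nonneg
            (fun n => mul_nonneg hq0.le (pow_nonneg h1q0 n)) hsummable).symm
      _ = 1 := by
          rw [tsum_mul_left, tsum_geometric_of_lt_one h1q0 h1q1]
          rw [show (1:ℝ) - (1 - q) = q by ring, mul_inv_cancel₀ hq0.ne']
          exact ENNReal.ofReal_one
  have hdisj0 : Disjoint {ω | Z ω = 0} (⋃ n : ℕ, {ω | Z ω = n + 1}) := by
    refine Set.disjoint_left.2 fun ω (h1 : Z ω = 0) h2 => ?_
    obtain ⟨n, hn⟩ := Set.mem_iUnion.1 h2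
    exact absurd (h1 ▸ hn : (0:ℕ) = n + 1) (by omega)
  have hunion : {ω | Z ω = 0} ∪ (⋃ n : ℕ, {ω | Z ω = n + 1}) = Set.univ := by
    ext ω; simp only [Set.mem_union, Set.mem_iUnion, Set.mem_setOf_eq, Set.mem_univ, iff_true]
    rcases Nat.eq_zero_or_pos (Z ω) with h | h
    · exact Or.inl h
    · exact Or.inr ⟨Z ω - 1, by omega⟩
  have := measure_union (μ := (ℙ : Measure Ω)) hdisj0 (MeasurableSet.iUnion fun n => hps (n + 1))
  rw [hunion, measure_univ, htail] at this
  have h2 : ℙ {ω | Z ω = 0} + 1 = 0 + 1 := by rw [zero_add, ← this]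
  exact (ENNReal.add_left_inj ENNReal.one_ne_top).1 h2


lemma stmt10_series_bound (B : ℝ) (hB : 1 ≤ B) :
    (1 / B) * Real.exp (1 / (2 * B)) * Real.exp (1 / (2 * B)) *
      (1 - Real.exp (-(1 / (2 * B))))⁻¹ ≤ 9 := by
  have hB0 : (0:ℝ) < B := lt_of_lt_of_le one_pos hB
  set lam : ℝ := 1 / (2 * B) with hlam
  have hlam0 : 0 < lam := by positivity
  have he : Real.exp lam * Real.exp (-lam) = 1 := by
    rw [← Real.exp_add]; simp
  have h2 : lam * Real.exp (-lam) ≤ 1 - Real.exp (-lam) := by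
    nlinarith [Real.add_one_le_exp lam, Real.exp_pos (-lam)]
  have h3 : 0 < lam * Real.exp (-lam) := by positivity
  have h4 : (1 - Real.exp (-lam))⁻¹ ≤ (lam * Real.exp (-lam))⁻¹ := by
    exact inv_anti₀ h3 h2
  have h5 : (lam * Real.exp (-lam))⁻¹ = lam⁻¹ * Real.exp lam := by
    rw [mul_inv, Real.exp_neg, inv_inv]
  have h6 : Real.exp lam * Real.exp lam * Real.exp lam = Real.exp (3 * lam) := by
    rw [← Real.exp_add, ← Real.exp_add]; ring_nf
  have h7 : Real.exp (3 * lam) ≤ Real.exp (3 / 2) := by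
    apply Real.exp_le_exp.2
    rw [hlam]
    rw [show 3 * (1 / (2 * B)) = (3 / 2) / B by field_simp]
    calc (3 / 2) / B ≤ (3 / 2) / 1 := by
          apply div_le_div_of_nonneg_left (by norm_num) one_pos hB
      _ = 3 / 2 := by norm_num
  have h8 : Real.exp (3 / 2) ≤ 9 / 2 := by
    have hsq : Real.exp (3 / 2) ^ 2 = Real.exp 1 ^ 3 := by
      rw [← Real.exp_nat_mul, ← Real.exp_nat_mul]; norm_num
    have hcube : Real.exp 1 ^ 3 < (2.7182818286 : ℝ) ^ 3 :=
      pow_lt_pow_left₀ Real.exp_one_lt_d9 (Real.exp_pos 1).le (by norm_num)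
    have hnum : (2.7182818286 : ℝ) ^ 3 < 20.25 := by norm_num
    nlinarith [Real.exp_pos (3/2 : ℝ)]
  have hinv : lam⁻¹ = 2 * B := by rw [hlam]; field_simp
  calc (1 / B) * Real.exp lam * Real.exp lam * (1 - Real.exp (-lam))⁻¹
      ≤ (1 / B) * Real.exp lam * Real.exp lam * (lam⁻¹ * Real.exp lam) := by
        rw [← h5]
        have h10 : 0 ≤ (1 / B) * Real.exp lam * Real.exp lam := by positivity
        exact mul_le_mul_of_nonneg_left h4 h10
    _ = (1 / B) * (2 * B) * (Real.exp lam * Real.exp lam * Real.exp lam) := by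
        rw [hinv]; ring
    _ = 2 * Real.exp (3 * lam) := by rw [h6]; field_simp
    _ ≤ 2 * (9 / 2) := by nlinarith
    _ = 9 := by norm_num

lemma stmt10_lint {Ω : Type} [MeasureSpace Ω] [IsProbabilityMeasure (ℙ : Measure Ω)]
    (Z : Ω → ℕ) (hZ : Measurable Z) (q lam : ℝ) (hq0 : 0 < q) (hq1 : q ≤ 1)
    (hlam0 : 0 < lam) (hkey : Real.exp lam * (1 - q) ≤ Real.exp (-lam))
    (hbound : q * Real.exp lam * Real.exp lam * (1 - Real.exp (-lam))⁻¹ ≤ 9)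
    (hdist : ∀ s : ℕ, 1 ≤ s → ℙ {ω | Z ω = s} = ENNReal.ofReal (q * (1 - q) ^ (s - 1)))
    (hzero : ℙ {ω | Z ω = 0} = 0) :
    ∫⁻ ω, ENNReal.ofReal (Real.exp (lam * (Z ω : ℝ))) ∂ℙ ≤ ENNReal.ofReal 9 := by
  have h1q0 : (0:ℝ) ≤ 1 - q := by linarith
  have hr0 : (0:ℝ) ≤ Real.exp (-lam) := (Real.exp_pos _).le
  have hr1 : Real.exp (-lam) < 1 := by
    rw [Real.exp_lt_one_iff]; linarith
  have hea : Real.exp lam * Real.exp (-lam) = 1 := by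
    rw [← Real.exp_add]; simp
  have hF : Measurable fun s : ℕ => ENNReal.ofReal (Real.exp (lam * (s : ℝ))) :=
    measurable_of_countable _
  rw [← lintegral_map hF hZ, lintegral_countable']
  have hmap : ∀ s : ℕ, (Measure.map Z ℙ) {s} = ℙ {ω | Z ω = s} := fun s => by
    rw [Measure.map_apply hZ (measurableSet_singleton s)]; rfl
  have hterm : ∀ s : ℕ,
      ENNReal.ofReal (Real.exp (lam * (s : ℝ))) * (Measure.map Z ℙ) {s} ≤
        ENNReal.ofReal ((q * Real.exp lam * Real.exp lam) * Real.exp (-lam) ^ s) := by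
    intro s
    rw [hmap s]
    rcases Nat.eq_zero_or_pos s with h | h
    · simp [h, hzero]
    · rw [hdist s h, ← ENNReal.ofReal_mul (Real.exp_pos _).le]
      apply ENNReal.ofReal_le_ofReal
      obtain ⟨n, rfl⟩ : ∃ n, s = n + 1 := ⟨s - 1, by omega⟩
      simp only [Nat.add_sub_cancel]
      have hcast : ((n + 1 : ℕ) : ℝ) = (n : ℝ) + 1 := by push_cast; ring
      rw [hcast]
      have hexp : Real.exp (lam * ((n : ℝ) + 1)) = Real.exp lam * Real.exp lam ^ n := by
        rw [mul_add, mul_one, Real.exp_add, mul_comm lam (n:ℝ), Real.exp_nat_mul, mul_comm]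
      rw [hexp]
      have hpow : (Real.exp lam * (1 - q)) ^ n ≤ Real.exp (-lam) ^ n :=
        pow_le_pow_left₀ (mul_nonneg (Real.exp_pos _).le h1q0) hkey n
      calc Real.exp lam * Real.exp lam ^ n * (q * (1 - q) ^ n)
          = (q * Real.exp lam) * (Real.exp lam * (1 - q)) ^ n := by rw [mul_pow]; ring
        _ ≤ (q * Real.exp lam) * Real.exp (-lam) ^ n := by
            apply mul_le_mul_of_nonneg_left hpow
            positivity
        _ = (q * Real.exp lam) * Real.exp (-lam) ^ n * (Real.exp lam * Real.exp (-lam)) := by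
            rw [hea, mul_one]
        _ = (q * Real.exp lam * Real.exp lam) * Real.exp (-lam) ^ (n + 1) := by
            rw [pow_succ]; ring
  calc ∑' s : ℕ, ENNReal.ofReal (Real.exp (lam * (s : ℝ))) * (Measure.map Z ℙ) {s}
      ≤ ∑' s : ℕ, ENNReal.ofReal ((q * Real.exp lam * Real.exp lam) * Real.exp (-lam) ^ s) :=
        ENNReal.tsum_le_tsum hterm
    _ = ENNReal.ofReal (∑' s : ℕ, (q * Real.exp lam * Real.exp lam) * Real.exp (-lam) ^ s) :=
        (ENNReal.ofReal_tsum_of_nonneg (fun s => by positivity)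
          ((summable_geometric_of_lt_one hr0 hr1).mul_left _)).symm
    _ ≤ ENNReal.ofReal 9 := by
        apply ENNReal.ofReal_le_ofReal
        rw [tsum_mul_left, tsum_geometric_of_lt_one hr0 hr1]
        exact hbound

theorem stmt_10 :
    ∀ c : ℝ, 0 < c → ∃ C : ℝ, 0 < C ∧ ∃ c' : ℝ, 1 ≤ c' ∧
    ∀ (P K m : ℕ) (S B : ℝ), 2 ≤ P → 1 ≤ B → 0 < K →
    ((m : ℝ) ≤ S / K) →
    (c * K * P * Real.log P ≤ S) →
    ∀ (Ω : Type) [MeasureSpace Ω] [IsProbabilityMeasure (ℙ : Measure Ω)]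
      (X : Fin m → Ω → Fin P) (Sz : Fin m → Ω → ℕ),
      (∀ j, Measurable (X j)) → (∀ j, Measurable (Sz j)) →
      iIndepFun (fun j ω => (X j ω, Sz j ω)) ℙ →
      (∀ j, IndepFun (X j) (Sz j) ℙ) →
      (∀ j b, ℙ {ω | X j ω = b} = (P : ENNReal)⁻¹) →
      (∀ j, ∀ s : ℕ, 1 ≤ s →
        ℙ {ω | Sz j ω = s} = ENNReal.ofReal ((1 / B) * (1 - 1 / B) ^ (s - 1))) →
      1 - ENNReal.ofReal ((P : ℝ) ^ (-c')) ≤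
        ℙ {ω | ∀ b : Fin P,
          (∑ j ∈ Finset.univ.filter (fun j => X j ω = b), (Sz j ω : ℝ)) ≤
            C * B * S / (K * P)} := by
  intro c hc
  refine ⟨20 + 4 / c, by positivity, 1, le_refl 1, ?_⟩
  intro P K m S B hP hB hK hm hS Ω _ _ X Sz hXmeas hSzmeas hIndep hXSz hXunif hSzdist
  have hP0 : (0:ℝ) < P := by positivity
  have hP2 : (2:ℝ) ≤ P := by exact_mod_cast hP
  have hB0 : (0:ℝ) < B := lt_of_lt_of_le one_pos hB
  have hK0 : (0:ℝ) < K := by exact_mod_cast hK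
  have hlogP : 0 < Real.log P := Real.log_pos (by linarith)
  set q : ℝ := 1 / B with hq_def
  set lam : ℝ := 1 / (2 * B) with hlam_def
  have hq0 : 0 < q := by rw [hq_def]; positivity
  have hq1 : q ≤ 1 := by rw [hq_def, div_le_one hB0]; exact hB
  have hlam0 : 0 < lam := by rw [hlam_def]; positivity
  set ε : ℝ := (20 + 4 / c) * B * S / (K * P) with hε_def
  have hdist' : ∀ j, ∀ s : ℕ, 1 ≤ s →
      ℙ {ω | Sz j ω = s} = ENNReal.ofReal (q * (1 - q) ^ (s - 1)) := by
    intro j s hs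
    rw [hq_def]
    exact hSzdist j s hs
  -- Step A: Sz j is never 0 (a.s.)
  have hSz0 : ∀ j, ℙ {ω | Sz j ω = 0} = 0 := fun j =>
    stmt10_sz_zero (Sz j) (hSzmeas j) q hq0 hq1 (hdist' j)
  -- key exponential inequality
  have hkey : Real.exp lam * (1 - q) ≤ Real.exp (-lam) := by
    have h1 : 1 - q ≤ Real.exp (-q) := by
      have := Real.add_one_le_exp (-q); linarith
    have h2 : Real.exp lam * Real.exp (-q) = Real.exp (-lam) := by
      rw [← Real.exp_add]
      congr 1
      rw [hlam_def, hq_def]; field_simp; ring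
    calc Real.exp lam * (1 - q) ≤ Real.exp lam * Real.exp (-q) :=
        mul_le_mul_of_nonneg_left h1 (Real.exp_pos _).le
      _ = Real.exp (-lam) := h2
  have hbound : q * Real.exp lam * Real.exp lam * (1 - Real.exp (-lam))⁻¹ ≤ 9 := by
    rw [hq_def, hlam_def]
    exact stmt10_series_bound B hB
  -- Step B: the exponential moment lintegral bound
  have hL : ∀ j, ∫⁻ ω, ENNReal.ofReal (Real.exp (lam * (Sz j ω : ℝ))) ∂ℙ ≤
      ENNReal.ofReal 9 := fun j =>
    stmt10_lint (Sz j) (hSzmeas j) q lam hq0 hq1 hlam0 hkey hbound (hdist' j) (hSz0 j)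
  -- Step C: integrability and expectation bound for W j = exp(lam * Sz j)
  have hWmeas : ∀ j, Measurable fun ω => Real.exp (lam * (Sz j ω : ℝ)) := fun j =>
    (measurable_of_countable (fun n : ℕ => Real.exp (lam * (n : ℝ)))).comp (hSzmeas j)
  have hW_int : ∀ j, Integrable (fun ω => Real.exp (lam * (Sz j ω : ℝ))) ℙ := by
    intro j
    refine ⟨(hWmeas j).aestronglyMeasurable, ?_⟩
    rw [hasFiniteIntegral_iff_ofReal (ae_of_all _ fun ω => (Real.exp_pos _).le)]
    exact lt_of_le_of_lt (hL j) ENNReal.ofReal_lt_top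
  have hW_exp : ∀ j, ∫ ω, Real.exp (lam * (Sz j ω : ℝ)) ∂ℙ ≤ 9 := by
    intro j
    rw [integral_eq_lintegral_of_nonneg_ae (ae_of_all _ fun ω => (Real.exp_pos _).le)
      (hWmeas j).aestronglyMeasurable]
    exact ENNReal.toReal_le_of_le_ofReal (by norm_num) (hL j)
  -- the per-bin variables
  set Y : Fin P → Fin m → Ω → ℝ :=
    fun b j ω => (Sz j ω : ℝ) * (if X j ω = b then 1 else 0) with hY_def
  have hYmeas : ∀ b j, Measurable (Y b j) := by
    intro b j
    exact (measurable_of_countable (fun p : Fin P × ℕ =>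
      (p.2 : ℝ) * (if p.1 = b then 1 else 0))).comp
      ((hXmeas j).prodMk (hSzmeas j))
  have hYindep : ∀ b, iIndepFun (Y b) ℙ := by
    intro b
    exact hIndep.comp (fun _ p => (p.2 : ℝ) * (if p.1 = b then 1 else 0))
      (fun _ => measurable_of_countable _)
  -- Step D: mgf bound per (b, j), and integrability
  have hexpY_eq : ∀ b j, (fun ω => Real.exp (lam * Y b j ω)) =
      fun ω => 1 + (if X j ω = b then (1:ℝ) else 0) *
        (Real.exp (lam * (Sz j ω : ℝ)) - 1) := by
    intro b j
    funext ω
    by_cases h : X j ω = b <;> simp [hY_def, h]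
  have hID_int : ∀ b j, Integrable (fun ω => (if X j ω = b then (1:ℝ) else 0) *
      (Real.exp (lam * (Sz j ω : ℝ)) - 1)) ℙ := by
    intro b j
    refine Integrable.bdd_mul ((hW_int j).sub (integrable_const 1)) ?_ (c := 1) (ae_of_all _ fun ω => ?_)
    · exact ((measurable_of_countable (fun a : Fin P => if a = b then (1:ℝ) else 0)).comp
        (hXmeas j)).aestronglyMeasurable
    · by_cases h : X j ω = b <;> simp [h]
  have hexpY_int : ∀ b j, Integrable (fun ω => Real.exp (lam * Y b j ω)) ℙ := by
    intro b j
    rw [hexpY_eq b j]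
    exact (integrable_const 1).add (hID_int b j)
  have hmgf : ∀ b j, mgf (Y b j) ℙ lam ≤ Real.exp (8 / P) := by
    intro b j
    have hWexp := hW_exp j
    have hI_meas : Measurable fun ω => (if X j ω = b then (1:ℝ) else 0) :=
      (measurable_of_countable (fun a : Fin P => if a = b then (1:ℝ) else 0)).comp (hXmeas j)
    have hD_meas : Measurable fun ω => Real.exp (lam * (Sz j ω : ℝ)) - 1 :=
      (hWmeas j).sub measurable_const
    have hIndepID : IndepFun (fun ω => if X j ω = b then (1:ℝ) else 0)
        (fun ω => Real.exp (lam * (Sz j ω : ℝ)) - 1) ℙ :=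
      (hXSz j).comp (measurable_of_countable (fun a : Fin P => if a = b then (1:ℝ) else 0))
        (measurable_of_countable (fun n : ℕ => Real.exp (lam * (n : ℝ)) - 1))
    have hind : ∫ ω, (if X j ω = b then (1:ℝ) else 0) ∂ℙ = (P:ℝ)⁻¹ := by
      have hiff : (fun ω => if X j ω = b then (1:ℝ) else 0) =
          Set.indicator {ω | X j ω = b} (fun _ => 1) := by
        funext ω; simp [Set.indicator_apply, Set.mem_setOf_eq]
      rw [hiff, integral_indicator_const (1:ℝ) (show MeasurableSet {ω | X j ω = b} from (hXmeas j) (measurableSet_singleton b)),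
        measureReal_def, hXunif j b]
      simp [ENNReal.toReal_inv]
    have hD_int_eq : ∫ ω, (Real.exp (lam * (Sz j ω : ℝ)) - 1) ∂ℙ =
        (∫ ω, Real.exp (lam * (Sz j ω : ℝ)) ∂ℙ) - 1 := by
      rw [integral_sub (hW_int j) (integrable_const 1), integral_const]; simp
    have hmgf_eq : mgf (Y b j) ℙ lam =
        1 + (P:ℝ)⁻¹ * ((∫ ω, Real.exp (lam * (Sz j ω : ℝ)) ∂ℙ) - 1) := by
      show (∫ ω, Real.exp (lam * Y b j ω) ∂ℙ) = _
      rw [hexpY_eq b j, integral_add (integrable_const 1) (hID_int b j), integral_const]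
      have hmul := hIndepID.integral_mul_eq_mul_integral hI_meas.aestronglyMeasurable hD_meas.aestronglyMeasurable
      simp only [Pi.mul_def] at hmul
      rw [hmul]
      rw [hind, hD_int_eq]
      simp
    rw [hmgf_eq]
    have h1 : (P:ℝ)⁻¹ * ((∫ ω, Real.exp (lam * (Sz j ω : ℝ)) ∂ℙ) - 1) ≤ (P:ℝ)⁻¹ * 8 :=
      mul_le_mul_of_nonneg_left (by linarith) (by positivity)
    have h2 : (P:ℝ)⁻¹ * 8 = 8 / P := by ring
    have h3 := Real.add_one_le_exp (8 / (P:ℝ))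
    linarith
  -- arithmetic for the Chernoff exponent
  have harith : -lam * ε + (m:ℝ) * (8 / P) ≤ -2 * Real.log P := by
    have hKP : (0:ℝ) < K * P := by positivity
    have hT : c * Real.log P ≤ S / (K * P) := by
      rw [le_div_iff₀ hKP]; nlinarith [hS]
    have hTpos : 0 ≤ S / (K * P) := le_trans (by positivity) hT
    have hmT : (m:ℝ) / P ≤ S / (K * P) := by
      rw [div_le_div_iff₀ hP0 hKP]
      have h1 : (m:ℝ) * K ≤ S := by
        have := (le_div_iff₀ hK0).1 hm
        linarith
      nlinarith
    have hlamε : lam * ε = (10 + 2 / c) * (S / (K * P)) := by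
      rw [hlam_def, hε_def]; field_simp; ring
    have h1 : (2 / c) * (c * Real.log P) ≤ (2 / c) * (S / (K * P)) :=
      mul_le_mul_of_nonneg_left hT (by positivity)
    have h2 : (2 / c) * (c * Real.log P) = 2 * Real.log P := by field_simp
    have h3 : (m:ℝ) * (8 / P) = 8 * ((m:ℝ) / P) := by ring
    nlinarith [hmT]
  -- Step E: Chernoff bound per bin
  have hcher : ∀ b : Fin P, ℙ {ω | ε ≤ (∑ j, Y b j) ω} ≤
      ENNReal.ofReal (Real.exp (-2 * Real.log P)) := by
    intro b
    have hint_sum : Integrable (fun ω => Real.exp (lam * (∑ j, Y b j) ω)) ℙ :=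
      (hYindep b).integrable_exp_mul_sum (hYmeas b) (fun j _ => hexpY_int b j)
    have hch := measure_ge_le_exp_mul_mgf (μ := ℙ) (X := ∑ j, Y b j) ε hlam0.le hint_sum
    rw [(hYindep b).mgf_sum (hYmeas b) Finset.univ] at hch
    have hprod : ∏ j : Fin m, mgf (Y b j) ℙ lam ≤ Real.exp (8 / P) ^ m := by
      calc ∏ j : Fin m, mgf (Y b j) ℙ lam
          ≤ ∏ _j : Fin m, Real.exp (8 / P) :=
            Finset.prod_le_prod (fun j _ => mgf_nonneg) (fun j _ => hmgf b j)
        _ = Real.exp (8 / P) ^ m := by simp [Finset.prod_const]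
    have hfinal : Real.exp (-lam * ε) * ∏ j : Fin m, mgf (Y b j) ℙ lam ≤
        Real.exp (-2 * Real.log P) := by
      calc Real.exp (-lam * ε) * ∏ j : Fin m, mgf (Y b j) ℙ lam
          ≤ Real.exp (-lam * ε) * Real.exp (8 / P) ^ m :=
            mul_le_mul_of_nonneg_left hprod (Real.exp_pos _).le
        _ = Real.exp (-lam * ε + (m:ℝ) * (8 / P)) := by
            rw [← Real.exp_nat_mul, ← Real.exp_add]
        _ ≤ Real.exp (-2 * Real.log P) := Real.exp_le_exp.2 harith
    rw [ENNReal.le_ofReal_iff_toReal_le (measure_ne_top _ _) (Real.exp_pos _).le]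
    exact hch.trans hfinal
  -- Step F: union bound and conclusion
  have hSmeas : ∀ b, Measurable fun ω => (∑ j, Y b j) ω := by
    intro b
    have heq : (fun ω => (∑ j, Y b j) ω) = fun ω => ∑ j, Y b j ω := by
      funext ω; simp [Finset.sum_apply]
    rw [heq]
    exact Finset.measurable_sum _ (fun j _ => hYmeas b j)
  set G : Set Ω := {ω | ∀ b : Fin P, (∑ j, Y b j) ω ≤ ε} with hG_def
  have hGmeas : MeasurableSet G := by
    have heq : G = ⋂ b : Fin P, {ω | (∑ j, Y b j) ω ≤ ε} := by
      ext ω; simp [hG_def, Set.mem_iInter]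
    rw [heq]
    exact MeasurableSet.iInter fun b => measurableSet_le (hSmeas b) measurable_const
  have hgoalset : {ω | ∀ b : Fin P,
      (∑ j ∈ Finset.univ.filter (fun j => X j ω = b), (Sz j ω : ℝ)) ≤ ε} = G := by
    ext ω
    simp only [hG_def, Set.mem_setOf_eq]
    refine forall_congr' fun b => ?_
    have heq : (∑ j ∈ Finset.univ.filter (fun j => X j ω = b), (Sz j ω : ℝ)) =
        (∑ j, Y b j) ω := by
      rw [Finset.sum_apply, Finset.sum_filter]
      refine Finset.sum_congr rfl fun j _ => ?_
      by_cases h : X j ω = b <;> simp [hY_def, h]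
    rw [heq]
  have hcompl : ℙ Gᶜ ≤ ENNReal.ofReal ((P:ℝ) ^ (-(1:ℝ))) := by
    have hsub : Gᶜ ⊆ ⋃ b : Fin P, {ω | ε ≤ (∑ j, Y b j) ω} := by
      intro ω hω
      simp only [hG_def, Set.mem_compl_iff, Set.mem_setOf_eq, not_forall, not_le] at hω
      obtain ⟨b, hb⟩ := hω
      exact Set.mem_iUnion.2 ⟨b, hb.le⟩
    have hPexp : (P:ℝ) * Real.exp (-2 * Real.log P) = (P:ℝ) ^ (-(1:ℝ)) := by
      have hL' : Real.exp (Real.log P) = (P:ℝ) := Real.exp_log hP0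
      have hstep : (P:ℝ) * Real.exp (-2 * Real.log P) =
          Real.exp (Real.log P) * Real.exp (-2 * Real.log P) := by rw [hL']
      rw [hstep, ← Real.exp_add, Real.rpow_def_of_pos hP0]
      congr 1
      ring
    calc ℙ Gᶜ ≤ ℙ (⋃ b : Fin P, {ω | ε ≤ (∑ j, Y b j) ω}) := measure_mono hsub
      _ ≤ ∑ b : Fin P, ℙ {ω | ε ≤ (∑ j, Y b j) ω} := measure_iUnion_fintype_le _ _
      _ ≤ ∑ _b : Fin P, ENNReal.ofReal (Real.exp (-2 * Real.log P)) :=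
          Finset.sum_le_sum fun b _ => hcher b
      _ = (P : ENNReal) * ENNReal.ofReal (Real.exp (-2 * Real.log P)) := by
          simp [Finset.sum_const, Finset.card_univ, nsmul_eq_mul]
      _ = ENNReal.ofReal ((P:ℝ) * Real.exp (-2 * Real.log P)) := by
          rw [← ENNReal.ofReal_natCast P, ← ENNReal.ofReal_mul (by positivity)]
      _ = ENNReal.ofReal ((P:ℝ) ^ (-(1:ℝ))) := by rw [hPexp]
  rw [hgoalset, tsub_le_iff_right]
  calc (1:ENNReal) = ℙ (Set.univ : Set Ω) := measure_univ.symm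
    _ = ℙ G + ℙ Gᶜ := (measure_add_measure_compl hGmeas).symm
    _ ≤ ℙ G + ENNReal.ofReal ((P:ℝ) ^ (-(1:ℝ))) := add_le_add_right hcompl _
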